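/- Let p, q ≥ 2 with log p / log q irrational, and let μ be a continuous (non-atomic) ergodic ×p,×q-invariant Borel probability measure on 𝕋 ≅ [0,1). Then there exists an irrational x ∈ [0,1) such that (1/N²) ∑_{i=0}^{N-1} ∑_{j=0}^{N-1} δ_{p^i q^j x mod 1} converges to μ in the weak-* topology as N → ∞. -/

import Mathlib

set_option linter.unusedSectionVars false
open MeasureTheory Filter Topology


section LimsupHelpers

lemma bddAbove_seq {u : ℕ → ℝ} {C : ℝ} (hu : ∀ n, |u n| ≤ C) :
    IsBoundedUnder (· ≤ ·) atTop u :=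
  isBoundedUnder_of ⟨C, fun n => (abs_le.mp (hu n)).2⟩

lemma bddBelow_seq {u : ℕ → ℝ} {C : ℝ} (hu : ∀ n, |u n| ≤ C) :
    IsBoundedUnder (· ≥ ·) atTop u :=
  isBoundedUnder_of ⟨-C, fun n => (abs_le.mp (hu n)).1⟩

lemma cobddAbove_seq {u : ℕ → ℝ} {C : ℝ} (hu : ∀ n, |u n| ≤ C) :
    IsCoboundedUnder (· ≤ ·) atTop u :=
  (bddBelow_seq hu).isCoboundedUnder_le

lemma cobddBelow_seq {u : ℕ → ℝ} {C : ℝ} (hu : ∀ n, |u n| ≤ C) :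
    IsCoboundedUnder (· ≥ ·) atTop u :=
  (bddAbove_seq hu).isCoboundedUnder_ge

lemma limsup_le_limsup_of_tendsto_sub {u v : ℕ → ℝ} {C : ℝ}
    (hu : ∀ n, |u n| ≤ C) (hv : ∀ n, |v n| ≤ C)
    (h : Tendsto (fun n => u n - v n) atTop (nhds 0)) :
    limsup u atTop ≤ limsup v atTop := by
  refine le_of_forall_pos_le_add fun ε hε => ?_
  have hev : ∀ᶠ n in atTop, u n ≤ v n + ε := by
    have := Metric.tendsto_nhds.mp h ε hε
    filter_upwards [this] with n hn
    rw [Real.dist_eq, sub_zero] at hn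
    have := (abs_lt.mp hn).2
    linarith
  calc limsup u atTop ≤ limsup (fun n => v n + ε) atTop :=
        limsup_le_limsup hev (cobddAbove_seq hu)
          (isBoundedUnder_of ⟨C + ε, fun n => by have := (abs_le.mp (hv n)).2; linarith⟩)
    _ = limsup v atTop + ε :=
        limsup_add_const atTop v ε (bddAbove_seq hv) (cobddAbove_seq hv)

lemma limsup_eq_limsup_of_tendsto_sub {u v : ℕ → ℝ} {C : ℝ}
    (hu : ∀ n, |u n| ≤ C) (hv : ∀ n, |v n| ≤ C)
    (h : Tendsto (fun n => u n - v n) atTop (nhds 0)) :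
    limsup u atTop = limsup v atTop := by
  refine le_antisymm (limsup_le_limsup_of_tendsto_sub hu hv h) ?_
  apply limsup_le_limsup_of_tendsto_sub hv hu
  simpa using h.neg

lemma limsup_neg_seq {u : ℕ → ℝ} {C : ℝ} (hu : ∀ n, |u n| ≤ C) :
    limsup (fun n => -(u n)) atTop = -liminf u atTop := by
  have : (fun n => -(u n)) = (fun x : ℝ => -x) ∘ u := rfl
  rw [this]
  exact ((Antitone.map_liminf_of_continuousAt (F := atTop) (f := fun x : ℝ => -x)
    (fun a b hab => neg_le_neg hab) u (continuous_neg.continuousAt)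
    (cobddBelow_seq hu) (bddBelow_seq hu))).symm

lemma liminf_neg_seq {u : ℕ → ℝ} {C : ℝ} (hu : ∀ n, |u n| ≤ C) :
    liminf (fun n => -(u n)) atTop = -limsup u atTop := by
  have h2 : ∀ n, |(-(u n))| ≤ C := fun n => by rw [abs_neg]; exact hu n
  have := limsup_neg_seq h2
  simp only [neg_neg] at this
  linarith [this]

end LimsupHelpers

namespace BirkhoffAux

variable {X : Type*} [MeasurableSpace X]

noncomputable def bS (T : X → X) (φ : X → ℝ) (n : ℕ) (x : X) : ℝ :=
  ∑ i ∈ Finset.range n, φ (T^[i] x)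

noncomputable def bA (T : X → X) (φ : X → ℝ) (n : ℕ) (x : X) : ℝ := bS T φ n x / n

noncomputable def Lsup (T : X → X) (φ : X → ℝ) (x : X) : ℝ :=
  limsup (fun n => bA T φ n x) atTop

noncomputable def Linf (T : X → X) (φ : X → ℝ) (x : X) : ℝ :=
  liminf (fun n => bA T φ n x) atTop

variable {T : X → X} {φ : X → ℝ} {C : ℝ}

lemma bS_measurable (hT : Measurable T) (hφ : Measurable φ) (n : ℕ) :
    Measurable (bS T φ n) := by
  apply Finset.measurable_sum
  intro i _
  exact hφ.comp (hT.iterate i)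

lemma bA_measurable (hT : Measurable T) (hφ : Measurable φ) (n : ℕ) :
    Measurable (bA T φ n) := (bS_measurable hT hφ n).div_const _

lemma abs_bS_le (hC : ∀ x, |φ x| ≤ C) (n : ℕ) (x : X) : |bS T φ n x| ≤ n * C := by
  calc |bS T φ n x| ≤ ∑ i ∈ Finset.range n, |φ (T^[i] x)| := Finset.abs_sum_le_sum_abs _ _
    _ ≤ ∑ _i ∈ Finset.range n, C := Finset.sum_le_sum fun i _ => hC _
    _ = n * C := by simp [mul_comm]

lemma abs_bA_le (hC : ∀ x, |φ x| ≤ C) (hC0 : 0 ≤ C) (n : ℕ) (x : X) : |bA T φ n x| ≤ C := by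
  rcases Nat.eq_zero_or_pos n with rfl | hn
  · simp [bA, bS, hC0]
  · rw [bA, abs_div, abs_of_nonneg (by positivity : (0:ℝ) ≤ (n:ℝ))]
    rw [div_le_iff₀ (by exact_mod_cast hn)]
    calc |bS T φ n x| ≤ n * C := abs_bS_le hC n x
      _ = C * n := mul_comm _ _

lemma bS_succ' (n : ℕ) (x : X) : bS T φ (n + 1) x = φ x + bS T φ n (T x) := by
  rw [bS, Finset.sum_range_succ']
  simp only [Function.iterate_zero_apply, Function.iterate_succ_apply]
  rw [add_comm, bS]

-- maximal function
noncomputable def mx (T : X → X) (φ : X → ℝ) : ℕ → X → ℝ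
  | 0 => fun _ => 0
  | n + 1 => fun x => max (mx T φ n x) (bS T φ (n + 1) x)

lemma mx_nonneg (n : ℕ) (x : X) : 0 ≤ mx T φ n x := by
  induction n with
  | zero => simp [mx]
  | succ n ih => exact le_trans ih (le_max_left _ _)

lemma mx_mono {m n : ℕ} (h : m ≤ n) (x : X) : mx T φ m x ≤ mx T φ n x := by
  induction n with
  | zero => simp_all
  | succ n ih =>
    rcases Nat.eq_or_lt_of_le h with rfl | h'
    · exact le_refl _
    · exact le_trans (ih (Nat.lt_succ_iff.mp h')) (le_max_left _ _)

lemma mx_measurable (hT : Measurable T) (hφ : Measurable φ) (n : ℕ) :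
    Measurable (mx T φ n) := by
  induction n with
  | zero => simpa [mx] using measurable_const
  | succ n ih => exact Measurable.max ih (bS_measurable hT hφ (n + 1))

lemma mx_le (hC : ∀ x, |φ x| ≤ C) (hC0 : 0 ≤ C) (n : ℕ) (x : X) : mx T φ n x ≤ n * C := by
  induction n with
  | zero => simp [mx]
  | succ n ih =>
    refine max_le (le_trans ih ?_) (le_trans (le_abs_self _) (abs_bS_le hC (n+1) x))
    have : (n : ℝ) ≤ (n:ℝ) + 1 := by linarith
    push_cast
    nlinarith

lemma bS_le_mx {j n : ℕ} (h : j ≤ n) (x : X) : bS T φ j x ≤ mx T φ n x := by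
  induction n with
  | zero =>
    interval_cases j
    simp [bS, mx]
  | succ n ih =>
    rcases Nat.eq_or_lt_of_le h with rfl | h'
    · exact le_max_right _ _
    · exact le_trans (ih (Nat.lt_succ_iff.mp h')) (le_max_left _ _)

lemma exists_bS_of_mx_pos {n : ℕ} {x : X} (h : 0 < mx T φ n x) :
    ∃ k, 1 ≤ k ∧ k ≤ n ∧ mx T φ n x ≤ bS T φ k x := by
  induction n with
  | zero => simp [mx] at h
  | succ n ih =>
    have hmx : mx T φ (n+1) x = max (mx T φ n x) (bS T φ (n + 1) x) := rfl
    rcases max_choice (mx T φ n x) (bS T φ (n + 1) x) with hm | hm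
    · have h' : 0 < mx T φ n x := by rw [hmx, hm] at h; exact h
      obtain ⟨k, hk1, hkn, hkb⟩ := ih h'
      exact ⟨k, hk1, hkn.trans (Nat.le_succ n), by rw [hmx, hm]; exact hkb⟩
    · exact ⟨n + 1, Nat.succ_le_succ (Nat.zero_le n), le_refl _, by rw [hmx, hm]⟩

lemma mx_le_add_comp {n : ℕ} {x : X} (h : 0 < mx T φ n x) :
    mx T φ n x ≤ φ x + mx T φ n (T x) := by
  obtain ⟨k, hk1, hkn, hkb⟩ := exists_bS_of_mx_pos h
  calc mx T φ n x ≤ bS T φ k x := hkb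
    _ = φ x + bS T φ (k - 1) (T x) := by
        obtain ⟨m, rfl⟩ := Nat.exists_eq_add_of_le hk1
        rw [add_comm 1 m]
        simpa using bS_succ' m x
    _ ≤ φ x + mx T φ n (T x) := by
        have : k - 1 ≤ n := by omega
        exact add_le_add_right (bS_le_mx this (T x)) _

lemma integrable_of_bdd {f : X → ℝ} {c : ℝ} (μ : Measure X) [IsFiniteMeasure μ]
    (hf : Measurable f) (hc : ∀ x, |f x| ≤ c) : Integrable f μ := by
  refine ⟨hf.aestronglyMeasurable, ?_⟩
  apply MeasureTheory.HasFiniteIntegral.of_bounded (C := c)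
  exact Eventually.of_forall fun x => by simpa [Real.norm_eq_abs] using hc x

/-- integral under iterates -/
lemma integral_comp_iterate (μ : Measure X) [IsProbabilityMeasure μ]
    (hT : Measurable T) (hμ : Measure.map T μ = μ) (hφ : Measurable φ)
    (i : ℕ) : ∫ x, φ (T^[i] x) ∂μ = ∫ x, φ x ∂μ := by
  have hmap : Measure.map T^[i] μ = μ := by
    induction i with
    | zero => simp
    | succ n ih =>
      rw [Function.iterate_succ']
      rw [← Measure.map_map hT (hT.iterate n), ih, hμ]
  conv_rhs => rw [← hmap]
  rw [integral_map (hT.iterate i).aemeasurable hφ.aestronglyMeasurable]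

/-- Garsia's maximal ergodic lemma. -/
lemma maximal_ergodic (μ : Measure X) [IsProbabilityMeasure μ]
    (hT : Measurable T) (hμ : Measure.map T μ = μ) (hφ : Measurable φ)
    (hC : ∀ x, |φ x| ≤ C) (hC0 : 0 ≤ C) (n : ℕ) :
    0 ≤ ∫ x in {x | 0 < mx T φ n x}, φ x ∂μ := by
  set s := {x | 0 < mx T φ n x} with hs_def
  have hsm : MeasurableSet s := measurableSet_lt measurable_const (mx_measurable hT hφ n)
  have hint_mx : Integrable (mx T φ n) μ :=
    integrable_of_bdd μ (mx_measurable hT hφ n)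
      (fun x => by rw [abs_of_nonneg (mx_nonneg n x)]; exact mx_le hC hC0 n x)
  have hint_mxT : Integrable (fun x => mx T φ n (T x)) μ :=
    integrable_of_bdd μ ((mx_measurable hT hφ n).comp hT)
      (fun x => by rw [abs_of_nonneg (mx_nonneg n (T x))]; exact mx_le hC hC0 n (T x))
  have hint_φ : Integrable φ μ := integrable_of_bdd μ hφ hC
  have key : ∀ x ∈ s, mx T φ n x - mx T φ n (T x) ≤ φ x := by
    intro x hx
    have := mx_le_add_comp (T := T) (φ := φ) hx
    linarith
  have h1 : ∫ x in s, (mx T φ n x - mx T φ n (T x)) ∂μ ≤ ∫ x in s, φ x ∂μ := by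
    apply setIntegral_mono_on ((hint_mx.sub hint_mxT).integrableOn) (hint_φ.integrableOn) hsm key
  have h2 : ∫ x in s, (mx T φ n x - mx T φ n (T x)) ∂μ
      = ∫ x in s, mx T φ n x ∂μ - ∫ x in s, mx T φ n (T x) ∂μ :=
    integral_sub (hint_mx.integrableOn) (hint_mxT.integrableOn)
  have h3 : ∫ x in s, mx T φ n x ∂μ = ∫ x, mx T φ n x ∂μ := by
    rw [← integral_indicator hsm]
    congr 1
    funext x
    by_cases hx : x ∈ s
    · simp [Set.indicator_of_mem hx]
    · have : mx T φ n x = 0 := le_antisymm (not_lt.mp hx) (mx_nonneg n x)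
      simp [Set.indicator_of_notMem hx, this]
  have h4 : ∫ x in s, mx T φ n (T x) ∂μ ≤ ∫ x, mx T φ n (T x) ∂μ :=
    setIntegral_le_integral hint_mxT (Eventually.of_forall fun x => mx_nonneg n (T x))
  have h5 : ∫ x, mx T φ n (T x) ∂μ = ∫ x, mx T φ n x ∂μ := by
    conv_rhs => rw [← hμ]
    rw [integral_map hT.aemeasurable (mx_measurable hT hφ n).aestronglyMeasurable]
  linarith


-- appended into namespace later
lemma abs_Lsup_le (hC : ∀ x, |φ x| ≤ C) (hC0 : 0 ≤ C) (x : X) : |Lsup T φ x| ≤ C := by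
  have hb : ∀ n, |bA T φ n x| ≤ C := fun n => abs_bA_le hC hC0 n x
  rw [abs_le]
  constructor
  · apply le_limsup_of_frequently_le (Eventually.of_forall fun n => (abs_le.mp (hb n)).1).frequently
      (bddAbove_seq hb)
  · apply limsup_le_of_le (cobddAbove_seq hb) (Eventually.of_forall fun n => (abs_le.mp (hb n)).2)

lemma Lsup_measurable (hT : Measurable T) (hφ : Measurable φ) : Measurable (Lsup T φ) :=
  Measurable.limsup (fun n => bA_measurable hT hφ n)

lemma Linf_measurable (hT : Measurable T) (hφ : Measurable φ) : Measurable (Linf T φ) :=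
  Measurable.liminf (fun n => bA_measurable hT hφ n)

lemma tendsto_bA_sub (hC : ∀ x, |φ x| ≤ C) (hC0 : 0 ≤ C) (x : X) :
    Tendsto (fun n => bA T φ n (T x) - bA T φ (n + 1) x) atTop (nhds 0) := by
  apply squeeze_zero_norm' (a := fun n : ℕ => (2 * C + |φ x|) / n) (f := fun n => bA T φ n (T x) - bA T φ (n + 1) x)
  · filter_upwards [eventually_ge_atTop 1] with n hn
    have hn0 : (0:ℝ) < n := by exact_mod_cast hn
    have hkey : bA T φ n (T x) - bA T φ (n + 1) x
        = bS T φ (n+1) x * ((1:ℝ)/n - 1/(n+1)) - φ x / n := by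
      rw [bA, bA, bS_succ' n x]
      field_simp
      push_cast; ring
    rw [Real.norm_eq_abs, hkey]
    have hpos : (0:ℝ) ≤ (1:ℝ)/n - 1/(n+1) := by
      have : (1:ℝ)/(n+1) ≤ 1/n := by
        apply one_div_le_one_div_of_le hn0; linarith
      linarith
    have h1 : |bS T φ (n+1) x * ((1:ℝ)/n - 1/(n+1))| ≤ ((n:ℝ)+1) * C * ((1:ℝ)/n - 1/(n+1)) := by
      rw [abs_mul, abs_of_nonneg hpos]
      apply mul_le_mul_of_nonneg_right _ hpos
      exact_mod_cast (by exact_mod_cast abs_bS_le hC (n+1) x :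
        |bS T φ (n+1) x| ≤ ((n:ℝ)+1) * C)
    have h2 : ((n:ℝ)+1) * C * ((1:ℝ)/n - 1/(n+1)) = C / n := by
      field_simp
      ring
    calc |bS T φ (n+1) x * ((1:ℝ)/n - 1/(n+1)) - φ x / n|
        ≤ |bS T φ (n+1) x * ((1:ℝ)/n - 1/(n+1))| + |φ x / n| := abs_sub _ _
      _ ≤ C / n + |φ x| / n := by
          rw [h2] at h1
          refine add_le_add h1 ?_
          rw [abs_div, abs_of_nonneg hn0.le]
      _ = (2 * C + |φ x|) / n - C / n := by ring
      _ ≤ (2 * C + |φ x|) / n := by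
          have : 0 ≤ C / n := by positivity
          linarith
  · exact tendsto_const_div_atTop_nhds_zero_nat _

lemma Lsup_comp_T (hC : ∀ x, |φ x| ≤ C) (hC0 : 0 ≤ C) (x : X) :
    Lsup T φ (T x) = Lsup T φ x := by
  have hb1 : ∀ n, |bA T φ n (T x)| ≤ C := fun n => abs_bA_le hC hC0 n (T x)
  have hb2 : ∀ n, |bA T φ (n + 1) x| ≤ C := fun n => abs_bA_le hC hC0 (n+1) x
  have h1 : limsup (fun n => bA T φ n (T x)) atTop = limsup (fun n => bA T φ (n+1) x) atTop :=
    limsup_eq_limsup_of_tendsto_sub hb1 hb2 (tendsto_bA_sub hC hC0 x)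
  rw [Lsup, h1, Lsup]
  exact limsup_nat_add (fun n => bA T φ n x) 1

lemma bA_neg (n : ℕ) (x : X) : bA T (fun y => -φ y) n x = -(bA T φ n x) := by
  rw [bA, bA, bS, bS]
  rw [Finset.sum_neg_distrib]
  simp [neg_div]

lemma Lsup_neg_eq (hC : ∀ x, |φ x| ≤ C) (hC0 : 0 ≤ C) (x : X) :
    Lsup T (fun y => -φ y) x = -Linf T φ x := by
  rw [Lsup, Linf]
  have : (fun n => bA T (fun y => -φ y) n x) = fun n => -(bA T φ n x) := by
    funext n; exact bA_neg n x
  rw [this]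
  exact limsup_neg_seq (fun n => abs_bA_le hC hC0 n x)

lemma Linf_neg_eq (hC : ∀ x, |φ x| ≤ C) (hC0 : 0 ≤ C) (x : X) :
    Linf T (fun y => -φ y) x = -Lsup T φ x := by
  rw [Linf, Lsup]
  have : (fun n => bA T (fun y => -φ y) n x) = fun n => -(bA T φ n x) := by
    funext n; exact bA_neg n x
  rw [this]
  exact liminf_neg_seq (fun n => abs_bA_le hC hC0 n x)

lemma Linf_comp_T (hC : ∀ x, |φ x| ≤ C) (hC0 : 0 ≤ C) (x : X) :
    Linf T φ (T x) = Linf T φ x := by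
  have hC' : ∀ y, |(fun y => -φ y) y| ≤ C := fun y => by simpa using hC y
  have := Lsup_comp_T (T := T) (φ := fun y => -φ y) hC' hC0 x
  rw [Lsup_neg_eq hC hC0, Lsup_neg_eq hC hC0] at this
  linarith

lemma mx_eq_zero_of_bS_zero {x : X} (h : ∀ k, bS T φ k x = 0) (n : ℕ) : mx T φ n x = 0 := by
  induction n with
  | zero => rfl
  | succ n ih =>
    have hh : mx T φ (n+1) x = max (mx T φ n x) (bS T φ (n+1) x) := rfl
    rw [hh, ih, h (n+1)]
    simp

lemma measurableSet_E (hT : Measurable T) (hφ : Measurable φ) (a b : ℝ) :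
    MeasurableSet {x | Linf T φ x < a ∧ b < Lsup T φ x} := by
  have : {x | Linf T φ x < a ∧ b < Lsup T φ x}
      = {x | Linf T φ x < a} ∩ {x | b < Lsup T φ x} := rfl
  rw [this]
  exact (measurableSet_lt (Linf_measurable hT hφ) measurable_const).inter
    (measurableSet_lt measurable_const (Lsup_measurable hT hφ))

lemma E_invariant (hC : ∀ x, |φ x| ≤ C) (hC0 : 0 ≤ C) (a b : ℝ) :
    T ⁻¹' {x | Linf T φ x < a ∧ b < Lsup T φ x} = {x | Linf T φ x < a ∧ b < Lsup T φ x} := by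
  ext x
  simp only [Set.mem_preimage, Set.mem_setOf_eq]
  rw [Linf_comp_T hC hC0, Lsup_comp_T hC hC0]

lemma iter_mem_invariant {E : Set X} (hInv : T ⁻¹' E = E) (i : ℕ) (x : X) :
    T^[i] x ∈ E ↔ x ∈ E := by
  induction i generalizing x with
  | zero => simp
  | succ n ih =>
    rw [Function.iterate_succ_apply]
    rw [ih (T x)]
    constructor
    · intro h
      rw [← hInv]
      exact Set.mem_preimage.mpr h
    · intro h
      rw [← hInv] at h
      exact Set.mem_preimage.mp h

lemma claim1 (μ : Measure X) [IsProbabilityMeasure μ]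
    (hT : Measurable T) (hμ : Measure.map T μ = μ) (hφ : Measurable φ)
    (hC : ∀ x, |φ x| ≤ C) (hC0 : 0 ≤ C) (a b : ℝ) :
    b * (μ {x | Linf T φ x < a ∧ b < Lsup T φ x}).toReal
      ≤ ∫ x in {x | Linf T φ x < a ∧ b < Lsup T φ x}, φ x ∂μ := by
  set E := {x | Linf T φ x < a ∧ b < Lsup T φ x} with hE_def
  have hEm : MeasurableSet E := measurableSet_E hT hφ a b
  have hEinv : T ⁻¹' E = E := E_invariant hC hC0 a b
  set ψ := E.indicator (fun y => φ y - b) with hψ_def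
  have hψm : Measurable ψ := (hφ.sub measurable_const).indicator hEm
  have hψC : ∀ x, |ψ x| ≤ C + |b| := by
    intro x
    by_cases hx : x ∈ E
    · rw [hψ_def, Set.indicator_of_mem hx]
      calc |φ x - b| ≤ |φ x| + |b| := abs_sub _ _
        _ ≤ C + |b| := add_le_add_left (hC x) _
    · rw [hψ_def, Set.indicator_of_notMem hx]
      simp
      positivity
  have hψC0 : 0 ≤ C + |b| := by positivity
  set sn := fun n => {x | 0 < mx T ψ n x} with hsn_def
  have hsnm : ∀ n, MeasurableSet (sn n) :=
    fun n => measurableSet_lt measurable_const (mx_measurable hT hψm n)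
  have hsnE : ∀ n, sn n ⊆ E := by
    intro n x hx
    by_contra hxE
    have hzero : ∀ k, bS T ψ k x = 0 := by
      intro k
      rw [bS]
      apply Finset.sum_eq_zero
      intro i _
      rw [hψ_def]
      apply Set.indicator_of_notMem
      exact fun hmem => hxE ((iter_mem_invariant hEinv i x).mp hmem)
    have := mx_eq_zero_of_bS_zero hzero n
    rw [hsn_def] at hx
    simp only [Set.mem_setOf_eq, this] at hx
    exact lt_irrefl 0 hx
  have hmono : Monotone sn := by
    intro m n h x hx
    exact lt_of_lt_of_le hx (mx_mono h x)
  have hunion : (⋃ n, sn n) = E := by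
    apply Set.Subset.antisymm (Set.iUnion_subset hsnE)
    intro x hxE
    have hb' : ∀ n, |bA T φ n x| ≤ C := fun n => abs_bA_le hC hC0 n x
    have hfreq : ∃ᶠ n in atTop, b < bA T φ n x :=
      frequently_lt_of_lt_limsup (cobddAbove_seq hb') hxE.2
    obtain ⟨n, hbn, hn1⟩ := (hfreq.and_eventually (eventually_ge_atTop 1)).exists
    have hn0 : (0:ℝ) < n := by exact_mod_cast hn1
    have hSgt : b * n < bS T φ n x := by
      rw [bA] at hbn
      calc b * n < (bS T φ n x / n) * n := by
            apply mul_lt_mul_of_pos_right hbn hn0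
        _ = bS T φ n x := div_mul_cancel₀ _ hn0.ne'
    have hbSψ : bS T ψ n x = bS T φ n x - n * b := by
      rw [bS, bS]
      have : ∀ i ∈ Finset.range n, ψ (T^[i] x) = φ (T^[i] x) - b := by
        intro i _
        rw [hψ_def]
        exact Set.indicator_of_mem ((iter_mem_invariant hEinv i x).mpr hxE) _
      rw [Finset.sum_congr rfl this, Finset.sum_sub_distrib]
      simp [mul_comm]
    have hpos : 0 < bS T ψ n x := by rw [hbSψ]; linarith
    exact Set.mem_iUnion.mpr ⟨n, lt_of_lt_of_le hpos (bS_le_mx le_rfl x)⟩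
  have hψint : Integrable ψ μ := integrable_of_bdd μ hψm hψC
  have htends : Tendsto (fun n => ∫ x in sn n, ψ x ∂μ) atTop (𝓝 (∫ x in ⋃ n, sn n, ψ x ∂μ)) :=
    tendsto_setIntegral_of_monotone hsnm hmono hψint.integrableOn
  have hpos' : ∀ n, 0 ≤ ∫ x in sn n, ψ x ∂μ :=
    fun n => maximal_ergodic μ hT hμ hψm hψC hψC0 n
  have hlim : 0 ≤ ∫ x in ⋃ n, sn n, ψ x ∂μ := ge_of_tendsto' htends hpos'
  rw [hunion] at hlim
  have heq1 : ∫ x in E, ψ x ∂μ = ∫ x in E, (φ x - b) ∂μ := by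
    apply setIntegral_congr_fun hEm
    intro x hx
    rw [hψ_def]
    exact Set.indicator_of_mem hx _
  have heq2 : ∫ x in E, (φ x - b) ∂μ
      = ∫ x in E, φ x ∂μ - (μ E).toReal * b := by
    rw [integral_sub ((integrable_of_bdd μ hφ hC).integrableOn)
      (integrableOn_const (measure_ne_top μ E))]
    rw [setIntegral_const]
    simp [smul_eq_mul, Measure.real]
  rw [heq1, heq2] at hlim
  linarith

lemma E_null (μ : Measure X) [IsProbabilityMeasure μ]
    (hT : Measurable T) (hμ : Measure.map T μ = μ) (hφ : Measurable φ)
    (hC : ∀ x, |φ x| ≤ C) (hC0 : 0 ≤ C) {a b : ℝ} (hab : a < b) :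
    μ {x | Linf T φ x < a ∧ b < Lsup T φ x} = 0 := by
  set E := {x | Linf T φ x < a ∧ b < Lsup T φ x} with hE_def
  have h1 := claim1 μ hT hμ hφ hC hC0 a b
  have hC' : ∀ x, |(fun y => -φ y) x| ≤ C := fun x => by simpa using hC x
  have h2 := claim1 (T := T) (φ := fun y => -φ y) μ hT hμ hφ.neg hC' hC0 (-b) (-a)
  have hEeq : {x | Linf T (fun y => -φ y) x < -b ∧ -a < Lsup T (fun y => -φ y) x} = E := by
    ext x
    simp only [Set.mem_setOf_eq, hE_def]
    rw [Linf_neg_eq hC hC0, Lsup_neg_eq hC hC0]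
    constructor
    · rintro ⟨hh1, hh2⟩; constructor <;> linarith
    · rintro ⟨hh1, hh2⟩; constructor <;> linarith
  rw [hEeq] at h2
  have hIneg : ∫ x in E, (fun y => -φ y) x ∂μ = -∫ x in E, φ x ∂μ := by
    simp [integral_neg]
  rw [hIneg] at h2
  have hm0 : (0:ℝ) ≤ (μ E).toReal := ENNReal.toReal_nonneg
  have : (μ E).toReal = 0 := by nlinarith
  have hfin : μ E ≠ ⊤ := measure_ne_top μ E
  exact (ENNReal.toReal_eq_zero_iff _).mp this |>.resolve_right hfin

theorem birkhoff_ae (μ : Measure X) [IsProbabilityMeasure μ]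
    (hT : Measurable T) (hμ : Measure.map T μ = μ) (hφ : Measurable φ)
    (hC : ∀ x, |φ x| ≤ C) (hC0 : 0 ≤ C) :
    ∀ᵐ x ∂μ, Tendsto (fun n => bA T φ n x) atTop (𝓝 (Lsup T φ x)) := by
  have hbad : μ {x | Linf T φ x < Lsup T φ x} = 0 := by
    have hsub : {x | Linf T φ x < Lsup T φ x} ⊆
        ⋃ ab : ℚ × ℚ, ({x | Linf T φ x < ab.1 ∧ (ab.2:ℝ) < Lsup T φ x}
          ∩ {_x | (ab.1:ℝ) < (ab.2:ℝ)}) := by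
      intro x hx
      simp only [Set.mem_setOf_eq] at hx
      obtain ⟨r, hr1, hr2⟩ := exists_rat_btwn hx
      obtain ⟨s, hs1, hs2⟩ := exists_rat_btwn hr2
      exact Set.mem_iUnion.mpr ⟨(r, s), ⟨⟨hr1, hs2⟩, hs1⟩⟩
    apply measure_mono_null hsub
    apply measure_iUnion_null
    intro ab
    by_cases hab : (ab.1:ℝ) < (ab.2:ℝ)
    · exact measure_mono_null Set.inter_subset_left (E_null μ hT hμ hφ hC hC0 hab)
    · have hempty : {_x : X | (ab.1:ℝ) < (ab.2:ℝ)} = ∅ := by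
        ext y; simp [hab]
      rw [hempty, Set.inter_empty]
      exact measure_empty
  rw [measure_eq_zero_iff_ae_notMem] at hbad
  filter_upwards [hbad] with x hx
  have hb : ∀ n, |bA T φ n x| ≤ C := fun n => abs_bA_le hC hC0 n x
  have heq : Linf T φ x = Lsup T φ x :=
    le_antisymm (liminf_le_limsup (bddAbove_seq hb) (bddBelow_seq hb)) (not_lt.mp hx)
  exact tendsto_of_liminf_eq_limsup heq rfl (bddAbove_seq hb) (bddBelow_seq hb)

lemma integral_bA (μ : Measure X) [IsProbabilityMeasure μ]
    (hT : Measurable T) (hμ : Measure.map T μ = μ) (hφ : Measurable φ)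
    (hC : ∀ x, |φ x| ≤ C) {n : ℕ} (hn : 1 ≤ n) :
    ∫ x, bA T φ n x ∂μ = ∫ x, φ x ∂μ := by
  have hint : ∀ i : ℕ, Integrable (fun x => φ (T^[i] x)) μ :=
    fun i => integrable_of_bdd μ (hφ.comp (hT.iterate i)) (fun x => hC _)
  have hS : ∫ x, bS T φ n x ∂μ = n * ∫ x, φ x ∂μ := by
    have : ∫ x, bS T φ n x ∂μ = ∑ i ∈ Finset.range n, ∫ x, φ (T^[i] x) ∂μ := by
      rw [← integral_finset_sum _ (fun i _ => hint i)]
      rfl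
    rw [this]
    have : ∀ i ∈ Finset.range n, ∫ x, φ (T^[i] x) ∂μ = ∫ x, φ x ∂μ :=
      fun i _ => integral_comp_iterate μ hT hμ hφ i
    rw [Finset.sum_congr rfl this]
    simp [mul_comm]
  have hn0 : (n:ℝ) ≠ 0 := by positivity
  calc ∫ x, bA T φ n x ∂μ = (∫ x, bS T φ n x ∂μ) / n := by
        rw [← integral_div]; rfl
    _ = ∫ x, φ x ∂μ := by rw [hS]; field_simp

lemma integral_Lsup (μ : Measure X) [IsProbabilityMeasure μ]
    (hT : Measurable T) (hμ : Measure.map T μ = μ) (hφ : Measurable φ)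
    (hC : ∀ x, |φ x| ≤ C) (hC0 : 0 ≤ C) :
    ∫ x, Lsup T φ x ∂μ = ∫ x, φ x ∂μ := by
  have h := tendsto_integral_of_dominated_convergence (F := fun n x => bA T φ n x)
      (f := Lsup T φ) (bound := fun _ => C)
      (fun n => (bA_measurable hT hφ n).aestronglyMeasurable)
      (integrable_const C)
      (fun n => Eventually.of_forall fun x => by
        simpa [Real.norm_eq_abs] using abs_bA_le hC hC0 n x)
      (birkhoff_ae μ hT hμ hφ hC hC0)
  have h2 : Tendsto (fun n => ∫ x, bA T φ n x ∂μ) atTop (𝓝 (∫ x, φ x ∂μ)) := by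
    have hconst : Tendsto (fun _ : ℕ => ∫ x, φ x ∂μ) atTop (𝓝 (∫ x, φ x ∂μ)) :=
      tendsto_const_nhds
    refine Tendsto.congr' ?_ hconst
    filter_upwards [eventually_ge_atTop 1] with n hn
    exact (integral_bA μ hT hμ hφ hC hn).symm
  exact tendsto_nhds_unique h h2

lemma Lsup_mono {ψ : X → ℝ} {D : ℝ} (hCφ : ∀ x, |φ x| ≤ C) (hC0 : 0 ≤ C)
    (hDψ : ∀ x, |ψ x| ≤ D) (hD0 : 0 ≤ D) (hle : ∀ y, φ y ≤ ψ y) (x : X) :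
    Lsup T φ x ≤ Lsup T ψ x := by
  apply limsup_le_limsup (Eventually.of_forall fun n => ?_)
    (cobddAbove_seq (fun n => abs_bA_le hCφ hC0 n x))
    (bddAbove_seq (fun n => abs_bA_le hDψ hD0 n x))
  rcases Nat.eq_zero_or_pos n with rfl | hn
  · simp [bA, bS]
  · have hn0 : (0:ℝ) < n := by exact_mod_cast hn
    rw [bA, bA]
    have hsum : bS T φ n x ≤ bS T ψ n x := Finset.sum_le_sum fun i _ => hle _
    exact (div_le_div_iff_of_pos_right hn0).mpr hsum

lemma Lsup_nonneg (hφ0 : ∀ y, 0 ≤ φ y) (hC : ∀ x, |φ x| ≤ C) (hC0 : 0 ≤ C) (x : X) :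
    0 ≤ Lsup T φ x := by
  apply le_limsup_of_frequently_le
    (Eventually.of_forall (fun n => ?_)).frequently
    (bddAbove_seq (fun n => abs_bA_le hC hC0 n x))
  rw [bA]
  apply div_nonneg _ (Nat.cast_nonneg n)
  exact Finset.sum_nonneg fun i _ => hφ0 _

theorem double_ae (μ : Measure X) [IsProbabilityMeasure μ]
    (T S : X → X) (hTm : Measurable T) (hSm : Measurable S)
    (hTμ : Measure.map T μ = μ) (hSμ : Measure.map S μ = μ)
    (hcomm : ∀ x, T (S x) = S (T x))
    (herg : ∀ s : Set X, MeasurableSet s → T ⁻¹' s = s → S ⁻¹' s = s → μ s = 0 ∨ μ s = 1)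
    {φ : X → ℝ} (hφ : Measurable φ) {C : ℝ} (hC : ∀ x, |φ x| ≤ C) (hC0 : 0 ≤ C) :
    ∀ᵐ x ∂μ, Tendsto (fun N : ℕ => (1 / (N:ℝ)^2) *
      ∑ i ∈ Finset.range N, ∑ j ∈ Finset.range N, φ (T^[i] (S^[j] x)))
      atTop (𝓝 (∫ z, φ z ∂μ)) := by
  -- commuting iterates
  have hTS : ∀ i x, T^[i] (S x) = S (T^[i] x) := by
    intro i
    induction i with
    | zero => simp
    | succ n ih =>
      intro x
      rw [Function.iterate_succ_apply', Function.iterate_succ_apply', ih x, hcomm]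
  have hSTiter : ∀ i j x, S^[j] (T^[i] x) = T^[i] (S^[j] x) := by
    intro i j
    induction j with
    | zero => simp
    | succ m ih =>
      intro x
      rw [Function.iterate_succ_apply', Function.iterate_succ_apply', ih x, hTS]
  set g := Lsup S φ with hg_def
  have hg_meas : Measurable g := Lsup_measurable hSm hφ
  have hg_bd : ∀ x, |g x| ≤ C := fun x => abs_Lsup_le hC hC0 x
  have hgS : ∀ x, g (S x) = g x := fun x => Lsup_comp_T hC hC0 x
  set h := Lsup T g with hh_def
  have hh_meas : Measurable h := Lsup_measurable hTm hg_meas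
  have hh_bd : ∀ x, |h x| ≤ C := fun x => abs_Lsup_le hg_bd hC0 x
  have hhT : ∀ x, h (T x) = h x := fun x => Lsup_comp_T hg_bd hC0 x
  have hhS : ∀ x, h (S x) = h x := by
    intro x
    have hbA : ∀ n, bA T g n (S x) = bA T g n x := by
      intro n
      rw [bA, bA]
      congr 1
      rw [bS, bS]
      apply Finset.sum_congr rfl
      intro i _
      rw [hTS i x, hgS]
    rw [hh_def, Lsup, Lsup]
    congr 1
    funext n
    exact hbA n
  have hint_h : ∫ x, h x ∂μ = ∫ z, φ z ∂μ := by
    rw [hh_def, integral_Lsup μ hTm hTμ hg_meas hg_bd hC0,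
      hg_def, integral_Lsup μ hSm hSμ hφ hC hC0]
  -- h is a.e. constant, equal to ∫ φ
  have hconst : ∀ᵐ x ∂μ, h x = ∫ z, φ z ∂μ := by
    have hdicho : ∀ c : ℝ, μ {x | c < h x} = 0 ∨ μ {x | c < h x} = 1 := by
      intro c
      apply herg _ (measurableSet_lt measurable_const hh_meas)
      · ext x; simp only [Set.mem_preimage, Set.mem_setOf_eq, hhT]
      · ext x; simp only [Set.mem_preimage, Set.mem_setOf_eq, hhS]
    set Z := {c : ℝ | μ {x | c < h x} = 0} with hZ_def
    have hZne : C ∈ Z := by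
      have : {x | C < h x} = ∅ := by
        ext x
        simp only [Set.mem_setOf_eq, Set.mem_empty_iff_false, iff_false, not_lt]
        exact (abs_le.mp (hh_bd x)).2
      simp [hZ_def, this]
    have hZbd : BddBelow Z := by
      refine ⟨-C - 1, fun c hc => ?_⟩
      by_contra hcon
      push_neg at hcon
      have : {x | c < h x} = Set.univ := by
        ext x
        simp only [Set.mem_setOf_eq, Set.mem_univ, iff_true]
        have := (abs_le.mp (hh_bd x)).1
        linarith
      rw [hZ_def, Set.mem_setOf_eq, this, measure_univ] at hc
      exact one_ne_zero hc
    set c₀ := sInf Z with hc₀_def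
    have hA : ∀ c, c₀ < c → μ {x | c < h x} = 0 := by
      intro c hcgt
      obtain ⟨c', hc'Z, hc'lt⟩ := exists_lt_of_csInf_lt ⟨C, hZne⟩ hcgt
      apply measure_mono_null _ hc'Z
      intro x hx
      simp only [Set.mem_setOf_eq] at hx ⊢
      linarith
    have hB : ∀ c, c < c₀ → μ {x | c < h x} = 1 := by
      intro c hclt
      have hcnotZ : c ∉ Z := fun hcZ => absurd (csInf_le hZbd hcZ) (not_le.mpr hclt)
      rcases hdicho c with h0 | h1
      · exact absurd h0 hcnotZ
      · exact h1
    have null1 : μ {x | c₀ < h x} = 0 := by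
      have hsub : {x | c₀ < h x} ⊆ ⋃ n : ℕ, {x | c₀ + 1/(n+1) < h x} := by
        intro x hx
        simp only [Set.mem_setOf_eq] at hx
        obtain ⟨n, hn⟩ := exists_nat_one_div_lt (show (0:ℝ) < h x - c₀ by linarith)
        exact Set.mem_iUnion.mpr ⟨n, by simp only [Set.mem_setOf_eq]; push_cast; linarith⟩
      apply measure_mono_null hsub
      apply measure_iUnion_null
      intro n
      apply hA
      have : (0:ℝ) < 1/(n+1) := by positivity
      linarith
    have null2 : μ {x | h x < c₀} = 0 := by
      have hsub : {x | h x < c₀} ⊆ ⋃ n : ℕ, {x | (c₀ - 1/(n+1)) < h x}ᶜ := by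
        intro x hx
        simp only [Set.mem_setOf_eq] at hx
        obtain ⟨n, hn⟩ := exists_nat_one_div_lt (show (0:ℝ) < c₀ - h x by linarith)
        refine Set.mem_iUnion.mpr ⟨n, ?_⟩
        simp only [Set.mem_compl_iff, Set.mem_setOf_eq, not_lt]
        push_cast at hn ⊢
        linarith
      apply measure_mono_null hsub
      apply measure_iUnion_null
      intro n
      have hmeas : MeasurableSet {x | (c₀ - 1/(n+1)) < h x} :=
        measurableSet_lt measurable_const hh_meas
      have h1 : μ {x | (c₀ - 1/(n+1)) < h x} = 1 := by
        apply hB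
        have : (0:ℝ) < 1/((n:ℝ)+1) := by positivity
        linarith
      rw [measure_compl hmeas (measure_ne_top μ _), h1, measure_univ]
      simp
    have hae : ∀ᵐ x ∂μ, h x = c₀ := by
      have : μ {x | h x ≠ c₀} = 0 := by
        have hsub : {x | h x ≠ c₀} ⊆ {x | h x < c₀} ∪ {x | c₀ < h x} := by
          intro x hx
          rcases lt_or_gt_of_ne hx with h1 | h1
          · exact Or.inl h1
          · exact Or.inr h1
        exact measure_mono_null hsub (measure_union_null null2 null1)
      filter_upwards [measure_eq_zero_iff_ae_notMem.mp this] with x hx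
      simpa using hx
    have hc₀_val : c₀ = ∫ z, φ z ∂μ := by
      have h1 : ∫ x, h x ∂μ = c₀ := by
        rw [integral_congr_ae (g := fun _ => c₀) (by filter_upwards [hae] with x hx; exact hx)]
        simp
      linarith [hint_h, h1]
    filter_upwards [hae] with x hx
    rw [hx, hc₀_val]
  -- the error functions e_M
  have h2C0 : (0:ℝ) ≤ 2*C := by linarith
  have hbdd : ∀ (M : ℕ) (x : X),
      BddAbove (Set.range fun n : ℕ => |bA S φ (M+n) x - g x|) := by
    intro M x
    refine ⟨2*C, ?_⟩
    rintro _ ⟨n, rfl⟩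
    calc |bA S φ (M+n) x - g x| ≤ |bA S φ (M+n) x| + |g x| := abs_sub _ _
      _ ≤ C + C := add_le_add (abs_bA_le hC hC0 _ x) (hg_bd x)
      _ = 2*C := by ring
  set eM : ℕ → X → ℝ := fun M x => ⨆ n : ℕ, |bA S φ (M + n) x - g x| with heM_def
  have heM_meas : ∀ M, Measurable (eM M) :=
    fun M => Measurable.iSup (fun n => ((bA_measurable hSm hφ (M+n)).sub hg_meas).abs)
  have heM_nonneg : ∀ M x, 0 ≤ eM M x :=
    fun M x => le_trans (abs_nonneg _) (le_ciSup (hbdd M x) 0)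
  have heM_bd : ∀ M x, |eM M x| ≤ 2*C := by
    intro M x
    rw [abs_of_nonneg (heM_nonneg M x)]
    apply ciSup_le
    intro n
    calc |bA S φ (M+n) x - g x| ≤ |bA S φ (M+n) x| + |g x| := abs_sub _ _
      _ ≤ C + C := add_le_add (abs_bA_le hC hC0 _ x) (hg_bd x)
      _ = 2*C := by ring
  have heM_anti : ∀ x, Antitone (fun M => eM M x) := by
    intro x
    apply antitone_nat_of_succ_le
    intro M
    apply ciSup_le
    intro n
    have hidx : M+1+n = M+(n+1) := by omega
    rw [hidx]
    exact le_ciSup (hbdd M x) (n+1)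
  have hkey : ∀ M N x, M ≤ N → |bA S φ N x - g x| ≤ eM M x := by
    intro M N x hMN
    have hidx : M + (N - M) = N := by omega
    calc |bA S φ N x - g x| = |bA S φ (M + (N-M)) x - g x| := by rw [hidx]
      _ ≤ eM M x := le_ciSup (hbdd M x) (N-M)
  have heM_tend : ∀ᵐ x ∂μ, Tendsto (fun M => eM M x) atTop (𝓝 0) := by
    filter_upwards [birkhoff_ae μ hSm hSμ hφ hC hC0] with x hx
    rw [Metric.tendsto_atTop]
    intro ε hε
    obtain ⟨M₀, hM₀⟩ := Metric.tendsto_atTop.mp hx (ε/2) (by linarith)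
    refine ⟨M₀, fun M hM => ?_⟩
    rw [Real.dist_eq, sub_zero, abs_of_nonneg (heM_nonneg M x)]
    have h1 : eM M x ≤ eM M₀ x := heM_anti x hM
    have h2 : eM M₀ x ≤ ε/2 := by
      apply ciSup_le
      intro n
      have := hM₀ (M₀ + n) (Nat.le_add_right _ _)
      rw [Real.dist_eq] at this
      exact le_of_lt this
    linarith
  have hint_eM : ∀ M, Integrable (eM M) μ :=
    fun M => integrable_of_bdd μ (heM_meas M) (heM_bd M)
  have heM_int_tend : Tendsto (fun M => ∫ x, eM M x ∂μ) atTop (𝓝 0) := by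
    have := tendsto_integral_of_dominated_convergence (F := fun M x => eM M x)
      (f := fun _ => (0:ℝ)) (bound := fun _ => 2*C)
      (fun M => (heM_meas M).aestronglyMeasurable)
      (integrable_const _)
      (fun M => Eventually.of_forall fun x => by
        simpa [Real.norm_eq_abs] using heM_bd M x)
      heM_tend
    simpa using this
  -- the limit functions ℓ M and their infimum
  set ℓ : ℕ → X → ℝ := fun M => Lsup T (eM M) with hℓ_def
  have hℓ_nonneg : ∀ M x, 0 ≤ ℓ M x :=
    fun M x => Lsup_nonneg (heM_nonneg M) (heM_bd M) h2C0 x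
  have hℓ_bd : ∀ M x, |ℓ M x| ≤ 2*C := fun M x => abs_Lsup_le (heM_bd M) h2C0 x
  have hℓ_meas : ∀ M, Measurable (ℓ M) := fun M => Lsup_measurable hTm (heM_meas M)
  have hℓ_int_eq : ∀ M, ∫ x, ℓ M x ∂μ = ∫ x, eM M x ∂μ :=
    fun M => integral_Lsup μ hTm hTμ (heM_meas M) (heM_bd M) h2C0
  set linf : X → ℝ := fun x => ⨅ M : ℕ, ℓ M x with hlinf_def
  have hlinf_bddb : ∀ x, BddBelow (Set.range fun M => ℓ M x) := by
    intro x
    exact ⟨0, by rintro _ ⟨M, rfl⟩; exact hℓ_nonneg M x⟩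
  have hlinf_le : ∀ M x, linf x ≤ ℓ M x := fun M x => ciInf_le (hlinf_bddb x) M
  have hlinf_nonneg : ∀ x, 0 ≤ linf x := fun x => le_ciInf (fun M => hℓ_nonneg M x)
  have hlinf_meas : Measurable linf := Measurable.iInf hℓ_meas
  have hlinf_bd : ∀ x, |linf x| ≤ 2*C := by
    intro x
    rw [abs_of_nonneg (hlinf_nonneg x)]
    exact le_trans (hlinf_le 0 x) (le_trans (le_abs_self _) (hℓ_bd 0 x))
  have hlinf_int : Integrable linf μ := integrable_of_bdd μ hlinf_meas hlinf_bd
  have hlinf_zero : ∀ᵐ x ∂μ, linf x = 0 := by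
    have hle : ∀ M, ∫ x, linf x ∂μ ≤ ∫ x, eM M x ∂μ := by
      intro M
      rw [← hℓ_int_eq M]
      exact integral_mono hlinf_int
        (integrable_of_bdd μ (hℓ_meas M) (hℓ_bd M)) (hlinf_le M)
    have h1 : ∫ x, linf x ∂μ ≤ 0 :=
      ge_of_tendsto' heM_int_tend hle
    have h2 : 0 ≤ ∫ x, linf x ∂μ :=
      integral_nonneg hlinf_nonneg
    have h3 : ∫ x, linf x ∂μ = 0 := le_antisymm h1 h2
    have := (integral_eq_zero_iff_of_nonneg hlinf_nonneg hlinf_int).mp h3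
    filter_upwards [this] with x hx
    exact hx
  -- assemble
  have HA : ∀ᵐ x ∂μ, ∀ M, Tendsto (fun N => bA T (eM M) N x) atTop (𝓝 (ℓ M x)) :=
    ae_all_iff.mpr fun M => birkhoff_ae μ hTm hTμ (heM_meas M) (heM_bd M) h2C0
  have HB : ∀ᵐ x ∂μ, Tendsto (fun N => bA T g N x) atTop (𝓝 (h x)) :=
    birkhoff_ae μ hTm hTμ hg_meas hg_bd hC0
  filter_upwards [HA, HB, hconst, hlinf_zero] with x hA hB hCc hD
  -- identity for the double average
  have hid : ∀ N : ℕ, (1 / (N:ℝ)^2) *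
      ∑ i ∈ Finset.range N, ∑ j ∈ Finset.range N, φ (T^[i] (S^[j] x))
      = bA T (bA S φ N) N x := by
    intro N
    rw [bA, bS]
    have hterm : ∀ i ∈ Finset.range N, bA S φ N (T^[i] x)
        = (∑ j ∈ Finset.range N, φ (T^[i] (S^[j] x))) / N := by
      intro i _
      rw [bA, bS]
      congr 1
      apply Finset.sum_congr rfl
      intro j _
      rw [hSTiter]
    rw [Finset.sum_congr rfl hterm, ← Finset.sum_div]
    rw [div_div]
    rw [sq]
    rw [one_div, ← div_eq_inv_mul]
  have hgoal : Tendsto (fun N => bA T (bA S φ N) N x) atTop (𝓝 (∫ z, φ z ∂μ)) := by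
    rw [hCc] at hB
    rw [Metric.tendsto_nhds]
    intro ε hε
    have hexM : ∃ M, ℓ M x < ε/3 := by
      by_contra hcon
      push_neg at hcon
      have hinf3 : ε/3 ≤ linf x := le_ciInf hcon
      rw [hD] at hinf3
      linarith
    obtain ⟨M, hM⟩ := hexM
    have hev1 : ∀ᶠ N in atTop, bA T (eM M) N x < ε/3 :=
      (hA M).eventually_lt_const hM
    have hev2 : ∀ᶠ N in atTop, dist (bA T g N x) (∫ z, φ z ∂μ) < ε/3 :=
      hB.eventually (Metric.ball_mem_nhds _ (by linarith))
    filter_upwards [hev1, hev2, eventually_ge_atTop M, eventually_ge_atTop 1]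
      with N h1 h2 hNM hN1
    have hN0 : (0:ℝ) < N := by exact_mod_cast hN1
    have hnum : |bS T (bA S φ N) N x - bS T g N x| ≤ bS T (eM M) N x := by
      rw [bS, bS, bS, ← Finset.sum_sub_distrib]
      calc |∑ i ∈ Finset.range N, (bA S φ N (T^[i] x) - g (T^[i] x))|
          ≤ ∑ i ∈ Finset.range N, |bA S φ N (T^[i] x) - g (T^[i] x)| :=
            Finset.abs_sum_le_sum_abs _ _
        _ ≤ ∑ i ∈ Finset.range N, eM M (T^[i] x) :=
            Finset.sum_le_sum fun i _ => hkey M N _ hNM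
    have hdiff : |bA T (bA S φ N) N x - bA T g N x| ≤ bA T (eM M) N x := by
      rw [bA, bA, div_sub_div_same, bA, abs_div, Nat.abs_cast]
      exact (div_le_div_iff_of_pos_right hN0).mpr hnum
    calc dist (bA T (bA S φ N) N x) (∫ z, φ z ∂μ)
        ≤ |bA T (bA S φ N) N x - bA T g N x| + dist (bA T g N x) (∫ z, φ z ∂μ) := by
          rw [Real.dist_eq, Real.dist_eq]
          exact abs_sub_le _ _ _
      _ < ε/3 + ε/3 := add_lt_add_of_le_of_lt (hdiff.trans (le_of_lt h1)) (Metric.mem_ball.mp h2)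
      _ < ε := by linarith
  exact Tendsto.congr (fun N => (hid N).symm) hgoal

end BirkhoffAux

open BirkhoffAux in
/-- Every continuous (non-atomic) ergodic `×p,×q`-invariant probability measure on the
circle is the weak-* limit of square Cesàro averages of Dirac measures along the orbit of
some irrational point `x ∈ [0,1)`. -/
theorem continuous_ergodic_measure_is_limit_of_diracs_along_irrational_orbit
    (p q : ℕ) (hp : 2 ≤ p) (hq : 2 ≤ q)
    (hirr : Irrational (Real.log p / Real.log q))
    (μ : Measure (AddCircle (1:ℝ))) [IsProbabilityMeasure μ]
    (hcont : ∀ z : AddCircle (1:ℝ), μ {z} = 0)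
    (hinvp : Measure.map (fun z => p • z) μ = μ)
    (hinvq : Measure.map (fun z => q • z) μ = μ)
    (herg : ∀ s : Set (AddCircle (1:ℝ)), MeasurableSet s →
      (fun z => p • z) ⁻¹' s = s → (fun z => q • z) ⁻¹' s = s → μ s = 0 ∨ μ s = 1) :
    ∃ x : ℝ, x ∈ Set.Ico (0:ℝ) 1 ∧ Irrational x ∧
      ∀ f : C(AddCircle (1:ℝ), ℝ),
        Tendsto
          (fun N : ℕ => (1 / (N : ℝ) ^ 2) *
            ∑ i ∈ Finset.range N, ∑ j ∈ Finset.range N,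
              f ((p ^ i * q ^ j) • (x : AddCircle (1:ℝ))))
          atTop (nhds (∫ z, f z ∂μ)) := by
  haveI : Fact ((0:ℝ) < 1) := ⟨zero_lt_one⟩
  have hcont_nsmul : ∀ n : ℕ, Continuous (fun z : AddCircle (1:ℝ) => n • z) := by
    intro n
    induction n with
    | zero =>
      have : (fun z : AddCircle (1:ℝ) => (0:ℕ) • z) = fun _ => 0 := by
        funext z; rw [zero_smul]
      rw [this]; exact continuous_const
    | succ m ih =>
      have : (fun z : AddCircle (1:ℝ) => (m+1) • z) = fun z => m • z + z := by
        funext z; rw [succ_nsmul]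
      rw [this]; exact ih.add continuous_id
  set T : AddCircle (1:ℝ) → AddCircle (1:ℝ) := fun z => p • z with hT_def
  set S : AddCircle (1:ℝ) → AddCircle (1:ℝ) := fun z => q • z with hS_def
  have hTm : Measurable T := (hcont_nsmul p).measurable
  have hSm : Measurable S := (hcont_nsmul q).measurable
  have hcomm : ∀ z, T (S z) = S (T z) := by
    intro z
    show p • (q • z) = q • (p • z)
    rw [← mul_smul, ← mul_smul, mul_comm]
  have hiterT : ∀ (i : ℕ) (z : AddCircle (1:ℝ)), T^[i] z = p^i • z := by
    intro i
    induction i with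
    | zero => intro z; simp
    | succ m ih =>
      intro z
      rw [Function.iterate_succ_apply', ih z]
      show p • (p^m • z) = p^(m+1) • z
      rw [← mul_smul, ← pow_succ']
  have hiterS : ∀ (j : ℕ) (z : AddCircle (1:ℝ)), S^[j] z = q^j • z := by
    intro j
    induction j with
    | zero => intro z; simp
    | succ m ih =>
      intro z
      rw [Function.iterate_succ_apply', ih z]
      show q • (q^m • z) = q^(m+1) • z
      rw [← mul_smul, ← pow_succ']
  haveI : NullSingletonClass μ := ⟨hcont⟩
  haveI : Nonempty C(AddCircle (1:ℝ), ℝ) := ⟨0⟩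
  set u : ℕ → C(AddCircle (1:ℝ), ℝ) := TopologicalSpace.denseSeq _ with hu
  have hdense : DenseRange u := TopologicalSpace.denseRange_denseSeq _
  have hgen : ∀ᵐ z ∂μ, ∀ m : ℕ, Tendsto (fun N : ℕ => (1 / (N:ℝ)^2) *
      ∑ i ∈ Finset.range N, ∑ j ∈ Finset.range N, (u m) (T^[i] (S^[j] z)))
      atTop (𝓝 (∫ w, (u m) w ∂μ)) := by
    rw [ae_all_iff]
    intro m
    exact double_ae μ T S hTm hSm hinvp hinvq hcomm herg
      ((u m).continuous.measurable) (C := ‖u m‖)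
      (fun z => by
        have := (u m).norm_coe_le_norm z
        rwa [Real.norm_eq_abs] at this)
      (norm_nonneg _)
  have hR : μ (Set.range (fun r : ℚ => ((r:ℝ) : AddCircle (1:ℝ)))) = 0 :=
    (Set.countable_range _).measure_zero μ
  have hae2 := hgen.and (measure_eq_zero_iff_ae_notMem.mp hR)
  haveI : (MeasureTheory.ae μ).NeBot :=
    MeasureTheory.ae_neBot.mpr (IsProbabilityMeasure.ne_zero μ)
  obtain ⟨z, hz, hzR⟩ := hae2.exists
  set x : ℝ := (AddCircle.equivIco 1 0 z : ℝ) with hx_def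
  have hx_mem : x ∈ Set.Ico (0:ℝ) 1 := by
    have h2 := (AddCircle.equivIco 1 0 z).2
    refine ⟨h2.1, ?_⟩
    simpa using h2.2
  have hxcoe : ((x : ℝ) : AddCircle (1:ℝ)) = z :=
    (AddCircle.equivIco (1:ℝ) 0).symm_apply_apply z
  have hxirr : Irrational x := by
    intro hmem
    obtain ⟨r, hr⟩ := hmem
    apply hzR
    refine ⟨r, ?_⟩
    show (((r:ℝ)) : AddCircle (1:ℝ)) = z
    rw [hr]
    exact hxcoe
  refine ⟨x, hx_mem, hxirr, ?_⟩
  intro f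
  have hexpr : ∀ (i j : ℕ),
      ((p^i * q^j) • ((x:ℝ) : AddCircle (1:ℝ))) = T^[i] (S^[j] z) := by
    intro i j
    rw [hxcoe, mul_smul, hiterT, hiterS]
  have hint_f : ∀ g : C(AddCircle (1:ℝ), ℝ), Integrable (fun w => g w) μ := by
    intro g
    exact integrable_of_bdd μ g.continuous.measurable (c := ‖g‖)
      (fun w => by have := g.norm_coe_le_norm w; rwa [Real.norm_eq_abs] at this)
  rw [Metric.tendsto_nhds]
  intro ε hε
  obtain ⟨m, hm⟩ : ∃ m, dist f (u m) < ε/4 := hdense.exists_dist_lt f (by linarith)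
  have hev := (hz m).eventually (Metric.ball_mem_nhds _ (show (0:ℝ) < ε/4 by linarith))
  filter_upwards [hev] with N hN
  have hd0 : (0:ℝ) ≤ dist f (u m) := dist_nonneg
  have hterm : ∀ w : AddCircle (1:ℝ), |f w - (u m) w| ≤ dist f (u m) := by
    intro w
    have := ContinuousMap.dist_apply_le_dist (f := f) (g := u m) w
    rwa [Real.dist_eq] at this
  -- bound on the averages difference
  have hsum : |(1/(N:ℝ)^2) * ∑ i ∈ Finset.range N, ∑ j ∈ Finset.range N,
        f ((p^i * q^j) • ((x:ℝ) : AddCircle (1:ℝ)))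
      - (1/(N:ℝ)^2) * ∑ i ∈ Finset.range N, ∑ j ∈ Finset.range N,
        (u m) (T^[i] (S^[j] z))| ≤ dist f (u m) := by
    rcases Nat.eq_zero_or_pos N with rfl | hN1
    · simpa using hd0
    · have hN0 : (0:ℝ) < (N:ℝ) := by exact_mod_cast hN1
      have hNsq : (0:ℝ) < (N:ℝ)^2 := by positivity
      rw [← mul_sub, ← Finset.sum_sub_distrib]
      have hinner : ∀ i ∈ Finset.range N,
          (∑ j ∈ Finset.range N, f ((p^i * q^j) • ((x:ℝ) : AddCircle (1:ℝ))))
            - ∑ j ∈ Finset.range N, (u m) (T^[i] (S^[j] z))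
          = ∑ j ∈ Finset.range N,
              (f (T^[i] (S^[j] z)) - (u m) (T^[i] (S^[j] z))) := by
        intro i _
        rw [← Finset.sum_sub_distrib]
        apply Finset.sum_congr rfl
        intro j _
        rw [hexpr]
      rw [Finset.sum_congr rfl hinner]
      rw [abs_mul, abs_of_nonneg (le_of_lt (one_div_pos.mpr hNsq))]
      have habs : |∑ i ∈ Finset.range N, ∑ j ∈ Finset.range N,
          (f (T^[i] (S^[j] z)) - (u m) (T^[i] (S^[j] z)))|
          ≤ (N:ℝ)^2 * dist f (u m) := by
        calc |∑ i ∈ Finset.range N, ∑ j ∈ Finset.range N,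
            (f (T^[i] (S^[j] z)) - (u m) (T^[i] (S^[j] z)))|
            ≤ ∑ i ∈ Finset.range N, |∑ j ∈ Finset.range N,
              (f (T^[i] (S^[j] z)) - (u m) (T^[i] (S^[j] z)))| :=
              Finset.abs_sum_le_sum_abs _ _
          _ ≤ ∑ _i ∈ Finset.range N, ((N:ℝ) * dist f (u m)) := by
              apply Finset.sum_le_sum
              intro i _
              calc |∑ j ∈ Finset.range N,
                  (f (T^[i] (S^[j] z)) - (u m) (T^[i] (S^[j] z)))|
                  ≤ ∑ j ∈ Finset.range N,
                    |f (T^[i] (S^[j] z)) - (u m) (T^[i] (S^[j] z))| :=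
                    Finset.abs_sum_le_sum_abs _ _
                _ ≤ ∑ _j ∈ Finset.range N, dist f (u m) :=
                    Finset.sum_le_sum fun j _ => hterm _
                _ = (N:ℝ) * dist f (u m) := by
                    rw [Finset.sum_const, Finset.card_range]; simp [mul_comm]
          _ = (N:ℝ) * ((N:ℝ) * dist f (u m)) := by
              rw [Finset.sum_const, Finset.card_range]; simp [mul_comm]
          _ = (N:ℝ)^2 * dist f (u m) := by ring
      calc (1/(N:ℝ)^2) * |∑ i ∈ Finset.range N, ∑ j ∈ Finset.range N,
            (f (T^[i] (S^[j] z)) - (u m) (T^[i] (S^[j] z)))|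
          ≤ (1/(N:ℝ)^2) * ((N:ℝ)^2 * dist f (u m)) := by
            apply mul_le_mul_of_nonneg_left habs (le_of_lt (one_div_pos.mpr hNsq))
        _ = dist f (u m) := by field_simp
  -- bound on the integrals difference
  have hints : |(∫ w, (u m) w ∂μ) - ∫ w, f w ∂μ| ≤ dist f (u m) := by
    rw [← integral_sub (hint_f (u m)) (hint_f f)]
    have := norm_integral_le_of_norm_le_const (μ := μ)
      (f := fun w => (u m) w - f w) (C := dist f (u m))
      (Eventually.of_forall fun w => by
        rw [Real.norm_eq_abs, abs_sub_comm]
        exact hterm w)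
    rw [Real.norm_eq_abs] at this
    simpa using this
  rw [Real.dist_eq]
  have h2 : dist ((1/(N:ℝ)^2) * ∑ i ∈ Finset.range N, ∑ j ∈ Finset.range N,
      (u m) (T^[i] (S^[j] z))) (∫ w, (u m) w ∂μ) < ε/4 := Metric.mem_ball.mp hN
  rw [Real.dist_eq] at h2
  calc |(1/(N:ℝ)^2) * ∑ i ∈ Finset.range N, ∑ j ∈ Finset.range N,
        f ((p^i * q^j) • ((x:ℝ) : AddCircle (1:ℝ))) - ∫ w, f w ∂μ|
      ≤ |(1/(N:ℝ)^2) * ∑ i ∈ Finset.range N, ∑ j ∈ Finset.range N,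
          f ((p^i * q^j) • ((x:ℝ) : AddCircle (1:ℝ)))
        - (1/(N:ℝ)^2) * ∑ i ∈ Finset.range N, ∑ j ∈ Finset.range N,
          (u m) (T^[i] (S^[j] z))|
        + |(1/(N:ℝ)^2) * ∑ i ∈ Finset.range N, ∑ j ∈ Finset.range N,
          (u m) (T^[i] (S^[j] z)) - ∫ w, (u m) w ∂μ|
        + |(∫ w, (u m) w ∂μ) - ∫ w, f w ∂μ| := by
        set A := (1/(N:ℝ)^2) * ∑ i ∈ Finset.range N, ∑ j ∈ Finset.range N,
          f ((p^i * q^j) • ((x:ℝ) : AddCircle (1:ℝ)))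
        set B := (1/(N:ℝ)^2) * ∑ i ∈ Finset.range N, ∑ j ∈ Finset.range N,
          (u m) (T^[i] (S^[j] z))
        set Im := ∫ w, (u m) w ∂μ
        set If := ∫ w, f w ∂μ
        calc |A - If| ≤ |A - Im| + |Im - If| := abs_sub_le _ _ _
          _ ≤ (|A - B| + |B - Im|) + |Im - If| := by
              have := abs_sub_le A B Im
              linarith
    _ < ε/4 + ε/4 + ε/4 :=
        add_lt_add (add_lt_add (lt_of_le_of_lt hsum hm) h2) (lt_of_le_of_lt hints hm)
    _ < ε := by linarith
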